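/- Let Φ : X × Y → ℝ and σ > 0. If π ∈ M(p,q) maximizes π' ↦ Σ_{x,y} π'(x,y) Φ(x,y) − σ I(π') over M(p,q), then π has full support: π(x,y) > 0 for every (x,y) ∈ X × Y. In particular, a pure matching (a coupling supported on the graph of a bijection between the supports) can never be optimal when both X and Y have at least two elements. -/

import Mathlib

open Finset Real

/-- A coupling of the probability mass functions `p` and `q`. -/
def IsCoupling {X Y : Type*} [Fintype X] [Fintype Y]
    (p : X → ℝ) (q : Y → ℝ) (μ : X × Y → ℝ) : Prop :=
  (∀ z, 0 ≤ μ z) ∧ (∀ x, ∑ y, μ (x, y) = p x) ∧ (∀ y, ∑ x, μ (x, y) = q y)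

/-- Mutual information of a coupling (with `0 log 0 = 0`, which holds since `Real.log 0 = 0`). -/
noncomputable def mutualInfo {X Y : Type*} [Fintype X] [Fintype Y]
    (p : X → ℝ) (q : Y → ℝ) (μ : X × Y → ℝ) : ℝ :=
  ∑ x, ∑ y, μ (x, y) * Real.log (μ (x, y) / (p x * q y))

/-- Shannon entropy of a probability mass function. -/
noncomputable def entropy {Z : Type*} [Fintype Z] (p : Z → ℝ) : ℝ :=
  -∑ z, p z * Real.log (p z)

lemma mix_log_le (ρz a b t : ℝ) (hρ : 0 < ρz) (ha : 0 ≤ a) (hb : 0 ≤ b)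
    (ht0 : 0 ≤ t) (ht1 : t ≤ 1) :
    ((1 - t) * a + t * b) * Real.log (((1 - t) * a + t * b) / ρz) ≤
      (1 - t) * (a * Real.log (a / ρz)) + t * (b * Real.log (b / ρz)) := by
  have key : ∀ c : ℝ, 0 ≤ c → c * Real.log (c / ρz) = c * Real.log c - c * Real.log ρz := by
    intro c hc
    rcases eq_or_lt_of_le hc with hh | hh
    · simp [← hh]
    · rw [Real.log_div hh.ne' hρ.ne']; ring
  have hm : 0 ≤ (1 - t) * a + t * b :=
    add_nonneg (mul_nonneg (by linarith) ha) (mul_nonneg ht0 hb)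
  have hcx := Real.convexOn_mul_log.2 (Set.mem_Ici.2 ha) (Set.mem_Ici.2 hb)
      (by linarith : (0:ℝ) ≤ 1 - t) ht0 (by ring)
  simp only [smul_eq_mul] at hcx
  rw [key _ hm, key _ ha, key _ hb]
  nlinarith [hcx]

lemma key_full_support {X Y : Type*} [Fintype X] [Fintype Y]
    (p : X → ℝ) (q : Y → ℝ) (hp : ∀ x, 0 < p x) (hq : ∀ y, 0 < q y)
    (hps : ∑ x, p x = 1) (hqs : ∑ y, q y = 1)
    (Φ : X × Y → ℝ) (σ : ℝ) (hσ : 0 < σ)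
    (μ : X × Y → ℝ) (hμ : IsCoupling p q μ)
    (hopt : ∀ μ' : X × Y → ℝ, IsCoupling p q μ' →
        (∑ x, ∑ y, μ' (x, y) * Φ (x, y)) - σ * mutualInfo p q μ'
          ≤ (∑ x, ∑ y, μ (x, y) * Φ (x, y)) - σ * mutualInfo p q μ) :
    ∀ z : X × Y, 0 < μ z := by
  classical
  intro z₀
  rcases (hμ.1 z₀).lt_or_eq with h | h
  · exact h
  exfalso
  set ρ : X × Y → ℝ := fun z => p z.1 * q z.2 with hρdef
  have hρpos : ∀ z, 0 < ρ z := fun z => mul_pos (hp z.1) (hq z.2)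
  set L : ℝ := ∑ x, ∑ y, μ (x, y) * Φ (x, y) with hL
  set A : ℝ := ∑ x, ∑ y, ρ (x, y) * Φ (x, y) with hA
  set Iμ : ℝ := mutualInfo p q μ with hIμ
  set C : ℝ := A - L + σ * Iμ with hC
  set ρ₀ : ℝ := ρ z₀ with hρ₀
  have hρ₀pos : 0 < ρ₀ := hρpos z₀
  set t : ℝ := min (1/2) (Real.exp (C / (σ * ρ₀) - 1)) with htdef
  have ht0 : 0 < t := lt_min (by norm_num) (Real.exp_pos _)
  have ht1 : t ≤ 1 := le_trans (min_le_left _ _) (by norm_num)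
  have htlog : Real.log t < C / (σ * ρ₀) := by
    have h1 : Real.log t ≤ C / (σ * ρ₀) - 1 := by
      calc Real.log t ≤ Real.log (Real.exp (C / (σ * ρ₀) - 1)) :=
            Real.log_le_log ht0 (min_le_right _ _)
        _ = C / (σ * ρ₀) - 1 := Real.log_exp _
    linarith
  set ν : X × Y → ℝ := fun z => (1 - t) * μ z + t * ρ z with hν
  have hνc : IsCoupling p q ν := by
    refine ⟨fun z => ?_, fun x => ?_, fun y => ?_⟩
    · exact add_nonneg (mul_nonneg (by linarith) (hμ.1 z)) (mul_nonneg ht0.le (hρpos z).le)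
    · simp only [hν]
      rw [Finset.sum_add_distrib, ← Finset.mul_sum, ← Finset.mul_sum, hμ.2.1 x]
      simp only [hρdef]
      rw [← Finset.mul_sum, hqs]
      ring
    · simp only [hν]
      rw [Finset.sum_add_distrib, ← Finset.mul_sum, ← Finset.mul_sum, hμ.2.2 y]
      simp only [hρdef]
      rw [← Finset.sum_mul, hps]
      ring
  have heqν : mutualInfo p q ν = ∑ z : X × Y, ν z * Real.log (ν z / ρ z) :=
    (Fintype.sum_prod_type fun z => ν z * Real.log (ν z / ρ z)).symm
  have heqμ : Iμ = ∑ z : X × Y, μ z * Real.log (μ z / ρ z) := by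
    rw [hIμ]; exact (Fintype.sum_prod_type fun z => μ z * Real.log (μ z / ρ z)).symm
  have hIν : mutualInfo p q ν ≤ (1 - t) * Iμ + t * ρ₀ * Real.log t := by
    have hterm : ∀ z : X × Y, ν z * Real.log (ν z / ρ z) ≤
        (1 - t) * (μ z * Real.log (μ z / ρ z)) +
          (if z = z₀ then t * ρ₀ * Real.log t else 0) := by
      intro z
      by_cases hz : z = z₀
      · subst hz
        have hν0 : ν z = t * ρ₀ := by simp [hν, ← h, hρ₀]
        have hdiv : t * ρ₀ / ρ₀ = t := by field_simp
        rw [if_pos rfl, hν0, ← h, hρ₀, hdiv]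
        simp
      · rw [if_neg hz, add_zero]
        have hmix := mix_log_le (ρ z) (μ z) (ρ z) t (hρpos z) (hμ.1 z) (hρpos z).le ht0.le ht1
        have hzz : ρ z * Real.log (ρ z / ρ z) = 0 := by
          rw [div_self (hρpos z).ne']; simp
        calc ν z * Real.log (ν z / ρ z) ≤
              (1 - t) * (μ z * Real.log (μ z / ρ z)) + t * (ρ z * Real.log (ρ z / ρ z)) := hmix
          _ = (1 - t) * (μ z * Real.log (μ z / ρ z)) := by rw [hzz]; ring
    have hsum : ∑ z : X × Y, ν z * Real.log (ν z / ρ z) ≤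
        ∑ z : X × Y, ((1 - t) * (μ z * Real.log (μ z / ρ z)) +
          (if z = z₀ then t * ρ₀ * Real.log t else 0)) :=
      Finset.sum_le_sum fun z _ => hterm z
    rw [Finset.sum_add_distrib, ← Finset.mul_sum,
      Finset.sum_ite_eq' Finset.univ z₀ (fun _ => t * ρ₀ * Real.log t)] at hsum
    simp only [Finset.mem_univ, if_pos] at hsum
    rw [heqν, heqμ]
    exact hsum
  have hob := hopt ν hνc
  have hlin : (∑ x, ∑ y, ν (x, y) * Φ (x, y)) = (1 - t) * L + t * A := by
    simp only [hν, add_mul, Finset.sum_add_distrib, mul_assoc, ← Finset.mul_sum]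
    rfl
  rw [hlin] at hob
  have h2 : σ * mutualInfo p q ν ≤ σ * ((1 - t) * Iμ + t * ρ₀ * Real.log t) :=
    mul_le_mul_of_nonneg_left hIν hσ.le
  have h4 : t * C ≤ t * (σ * ρ₀ * Real.log t) := by
    rw [hC]; nlinarith [hob, h2]
  have h5 : C ≤ σ * ρ₀ * Real.log t := le_of_mul_le_mul_left h4 ht0
  have h6 : σ * ρ₀ * Real.log t < C := by
    have hmm : (σ * ρ₀) * (C / (σ * ρ₀)) = C := by
      field_simp
    nlinarith [mul_lt_mul_of_pos_left htlog (mul_pos hσ hρ₀pos)]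
  linarith

theorem optimal_coupling_full_support_and_no_pure
    {X Y : Type*} [Fintype X] [Fintype Y] [Nonempty X] [Nonempty Y]
    (p : X → ℝ) (q : Y → ℝ) (hp : ∀ x, 0 < p x) (hq : ∀ y, 0 < q y)
    (hps : ∑ x, p x = 1) (hqs : ∑ y, q y = 1)
    (Φ : X × Y → ℝ) (σ : ℝ) (hσ : 0 < σ) :
    (∀ μ : X × Y → ℝ, IsCoupling p q μ →
      (∀ μ' : X × Y → ℝ, IsCoupling p q μ' →
        (∑ x, ∑ y, μ' (x, y) * Φ (x, y)) - σ * mutualInfo p q μ'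
          ≤ (∑ x, ∑ y, μ (x, y) * Φ (x, y)) - σ * mutualInfo p q μ) →
      ∀ z : X × Y, 0 < μ z) ∧
    (1 < Fintype.card X → 1 < Fintype.card Y →
      ∀ μ : X × Y → ℝ, IsCoupling p q μ →
      (∃ T : X ≃ Y, ∀ x y, μ (x, y) ≠ 0 → y = T x) →
      ¬ (∀ μ' : X × Y → ℝ, IsCoupling p q μ' →
        (∑ x, ∑ y, μ' (x, y) * Φ (x, y)) - σ * mutualInfo p q μ'
          ≤ (∑ x, ∑ y, μ (x, y) * Φ (x, y)) - σ * mutualInfo p q μ)) := by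
  constructor
  · intro μ hμ hopt
    exact key_full_support p q hp hq hps hqs Φ σ hσ μ hμ hopt
  · rintro hX hY μ hμ ⟨T, hT⟩ hopt
    have hfull := key_full_support p q hp hq hps hqs Φ σ hσ μ hμ hopt
    obtain ⟨x⟩ := ‹Nonempty X›
    obtain ⟨y, hy⟩ := Fintype.exists_ne_of_one_lt_card hY (T x)
    exact hy (hT x y (hfull (x, y)).ne')
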